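/- Let q be a prime power, t ≥ 1 and n ≥ 2 integers, and M = (𝔽_q^{n×n})^t. If C is a perfect linear sum-rank code in M with minimum distance d ∈ {5, 6}, then n divides the 𝔽_q-dimension of C. -/

import Mathlib

open Matrix

/-- The sum-rank weight of a tuple of matrices. -/
noncomputable def sumRankW {F : Type} [Field F] {t n m : ℕ}
    (X : Fin t → Matrix (Fin n) (Fin m) F) : ℕ :=
  ∑ i, (X i).rank

/-- The number of tuples of matrices of sum-rank weight at most `r`
(the volume of a sum-rank ball of radius `r`). -/
noncomputable def ballVol (F : Type) [Field F] [Fintype F] (t n m r : ℕ) : ℕ :=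
  Nat.card {X : Fin t → Matrix (Fin n) (Fin m) F // sumRankW X ≤ r}

/-- `d` is the minimum sum-rank distance of the linear code `C`:
`d` is the least sum-rank weight of a nonzero codeword of `C`
(in particular `C` contains a nonzero element). -/
def IsMinDist {F : Type} [Field F] {t n : ℕ}
    (C : Submodule F (Fin t → Matrix (Fin n) (Fin n) F)) (d : ℕ) : Prop :=
  IsLeast {w | ∃ x ∈ C, x ≠ 0 ∧ sumRankW x = w} d

/-- The linear code `C` with minimum distance `d` is perfect:
`|C| · V_{⌊(d-1)/2⌋} = |M|`. -/
def IsPerfect (F : Type) [Field F] [Fintype F] {t n : ℕ}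
    (C : Submodule F (Fin t → Matrix (Fin n) (Fin n) F)) (d : ℕ) : Prop :=
  Nat.card C * ballVol F t n n ((d - 1) / 2) =
    Nat.card (Fin t → Matrix (Fin n) (Fin n) F)

section Aux

open Polynomial


lemma aux_dvd_of_pow_sub_one_dvd {q n m : ℕ} (hq : 2 ≤ q) (hn : n ≠ 0)
    (h : q ^ n - 1 ∣ q ^ m - 1) : n ∣ m := by
  have hdm := Nat.div_add_mod m n
  set s := m / n; set r := m % n
  have hr : r < n := Nat.mod_lt _ (Nat.pos_of_ne_zero hn)
  have h1 : q ^ n - 1 ∣ q ^ (n * s) - 1 := by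
    simpa [one_pow, pow_mul] using Nat.sub_dvd_pow_sub_pow (q ^ n) 1 s
  have ha : 1 ≤ q ^ (n * s) := Nat.one_le_pow _ _ (by omega)
  have hb : 1 ≤ q ^ r := Nat.one_le_pow _ _ (by omega)
  have hm : q ^ m = q ^ (n * s) * q ^ r := by rw [← pow_add, hdm]
  have key : q ^ n - 1 ∣ q ^ r - 1 := by
    have hid : q ^ m - 1 = q ^ r * (q ^ (n * s) - 1) + (q ^ r - 1) := by
      obtain ⟨a, haeq⟩ : ∃ a, q ^ (n * s) = 1 + a := ⟨q ^ (n * s) - 1, by omega⟩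
      obtain ⟨b, hbeq⟩ : ∃ b, q ^ r = 1 + b := ⟨q ^ r - 1, by omega⟩
      rw [hm, hbeq, haeq]
      have : (1 + a) * (1 + b) = 1 + ((1 + b) * a + b) := by ring
      rw [this]; simp
    have := Nat.dvd_sub h (Dvd.dvd.mul_left h1 (q ^ r))
    simpa [hid, Nat.add_sub_cancel_left] using this
  have hlt : q ^ r - 1 < q ^ n - 1 := by
    have : q ^ r < q ^ n := Nat.pow_lt_pow_right (by omega) hr
    omega
  have hr0 : q ^ r - 1 = 0 := by
    rcases Nat.eq_zero_or_pos (q ^ r - 1) with h0 | hpos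
    · exact h0
    · exact absurd (Nat.le_of_dvd hpos key) (by omega)
  have : r = 0 := by
    by_contra hne
    have : q ^ 1 ≤ q ^ r := Nat.pow_le_pow_right (by omega) (by omega)
    simp at this; omega
  exact ⟨s, by omega⟩

lemma card_dvd_of_free_action {G α : Type*} [Group G] [Finite G] [Finite α] [MulAction G α]
    (hfree : ∀ (g : G) (a : α), g • a = a → g = 1) : Nat.card G ∣ Nat.card α := by
  classical
  have hstab : ∀ a : α, MulAction.stabilizer G a = ⊥ := fun a => by
    ext g; simp only [MulAction.mem_stabilizer_iff, Subgroup.mem_bot]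
    exact ⟨fun h => hfree g a h, fun h => by simp [h]⟩
  have horb : ∀ a : α, Nat.card (MulAction.orbit G a) = Nat.card G := fun a => by
    rw [Nat.card_congr (MulAction.orbitEquivQuotientStabilizer G a), hstab a,
      Nat.card_congr (QuotientGroup.quotientBot (G := G)).toEquiv]
  letI : Fintype α := Fintype.ofFinite α
  letI : Fintype (MulAction.orbitRel.Quotient G α) := Fintype.ofFinite _
  letI : ∀ ω : MulAction.orbitRel.Quotient G α, Fintype (MulAction.orbit G ω.out) :=
    fun ω => Fintype.ofFinite _
  have := Fintype.card_congr (MulAction.selfEquivSigmaOrbits G α)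
  rw [Fintype.card_sigma] at this
  rw [Nat.card_eq_fintype_card (α := α), this]
  refine Finset.dvd_sum (fun ω _ => ?_)
  rw [← Nat.card_eq_fintype_card, horb ω.out]


lemma finrank_of_isSplittingField (F : Type) [Field F] [Fintype F] {n : ℕ} (hn : n ≠ 0)
    (E : Type) [Field E] [Algebra F E] [Finite E]
    [hsplit : IsSplittingField F E (X ^ (Fintype.card F) ^ n - X)] :
    Module.finrank F E = n := by
  classical
  letI : Fintype E := Fintype.ofFinite _
  have hq2 : 1 < Fintype.card F := Fintype.one_lt_card
  set p := ringChar F with hp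
  haveI hpf : Fact p.Prime := ⟨CharP.char_is_prime F p⟩
  obtain ⟨k, -, hcard⟩ := FiniteField.card F p
  set g : F[X] := X ^ (Fintype.card F) ^ n - X with hg
  haveI charE : CharP E p := charP_of_injective_algebraMap' F (A := E) p
  have hsep : g.Separable := by
    refine galois_poly_separable p ((Fintype.card F) ^ n) ?_
    rw [hcard, ← pow_mul]
    exact dvd_pow_self p (by positivity)
  have gne : g ≠ 0 := FiniteField.X_pow_card_pow_sub_X_ne_zero F hn hq2
  have key : Fintype.card (g.rootSet E) = g.natDegree :=
    card_rootSet_eq_natDegree hsep (hsplit.splits)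
  have hdeg : g.natDegree = (Fintype.card F) ^ n :=
    FiniteField.X_pow_card_pow_sub_X_natDegree_eq F hn hq2
  have hqn : (Fintype.card F) ^ n = p ^ (k * n) := by rw [hcard, ← pow_mul]
  have hFfix : ∀ x : F, x ^ (Fintype.card F) ^ n = x := fun x =>
    FiniteField.pow_card_pow n x
  let ψ : E →ₐ[F] E :=
    { toRingHom := iterateFrobenius E p (k * n)
      commutes' := fun x => by
        show iterateFrobenius E p (k * n) (algebraMap F E x) = algebraMap F E x
        rw [iterateFrobenius_def, ← hqn, ← map_pow, hFfix] }
  have hpsi : ∀ x : E, ψ x = x ^ (Fintype.card F) ^ n := fun x => by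
    show iterateFrobenius E p (k * n) x = _
    rw [iterateFrobenius_def, hqn]
  have hroot_mem : ∀ x : E, x ∈ g.rootSet E ↔ x ^ (Fintype.card F) ^ n = x := fun x => by
    rw [mem_rootSet_of_ne gne, hg]
    simp only [map_sub, map_pow, aeval_X, sub_eq_zero]
  have huniv : g.rootSet E = Set.univ := by
    have hsub : g.rootSet E ⊆ (AlgHom.equalizer ψ (AlgHom.id F E) : Set E) := by
      intro x hx
      have := (hroot_mem x).mp hx
      simpa [AlgHom.mem_equalizer, hpsi] using this
    have htop : Algebra.adjoin F (g.rootSet E) = ⊤ := IsSplittingField.adjoin_rootSet (L := E) g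
    have hle : (⊤ : Subalgebra F E) ≤ AlgHom.equalizer ψ (AlgHom.id F E) := by
      rw [← htop]
      exact Algebra.adjoin_le hsub
    ext x
    simp only [Set.mem_univ, iff_true]
    have hx : ψ x = x := (AlgHom.mem_equalizer ψ (AlgHom.id F E) x).mp (hle trivial)
    rw [hroot_mem, ← hpsi, hx]
  have hall : ∀ x : E, x ∈ g.rootSet E := by
    rw [Set.eq_univ_iff_forall] at huniv; exact huniv
  have hcardE : Fintype.card E = (Fintype.card F) ^ n := by
    rw [← hdeg, ← key]
    exact (Fintype.card_congr (Equiv.subtypeUnivEquiv hall)).symm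
  have h2 := Module.card_eq_pow_finrank (K := F) (V := E)
  rw [hcardE] at h2
  exact (Nat.pow_right_injective hq2 h2.symm)

lemma exists_field_ext (F : Type) [Field F] [Fintype F] {n : ℕ} (hn : n ≠ 0) :
    ∃ (E : Type) (_ : Field E) (_ : Algebra F E) (_ : Finite E) (_ : Module.Finite F E),
      Module.finrank F E = n := by
  set g : F[X] := X ^ (Fintype.card F) ^ n - X with hg
  haveI : Finite g.SplittingField := Module.finite_of_finite F
  exact ⟨g.SplittingField, inferInstance, inferInstance, inferInstance, inferInstance,
    finrank_of_isSplittingField F hn g.SplittingField⟩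

end Aux

theorem stmt_11 (F : Type) [Field F] [Fintype F] (q t n : ℕ)
    (hq : Fintype.card F = q) (ht : 1 ≤ t) (hn : 2 ≤ n)
    (C : Submodule F (Fin t → Matrix (Fin n) (Fin n) F)) (d : ℕ)
    (hmin : IsMinDist C d) (hperf : IsPerfect F C d) (hd : d = 5 ∨ d = 6) :
    n ∣ Module.finrank F C := by
  classical
  subst hq
  set q := Fintype.card F with hqdef
  have hq2 : 2 ≤ q := Fintype.one_lt_card
  have hn0 : n ≠ 0 := by omega
  set r : ℕ := (d - 1) / 2 with hr
  -- the field extension of degree n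
  obtain ⟨E, _, _, _, _, hE⟩ := exists_field_ext F hn0
  letI : Fintype E := Fintype.ofFinite E
  have hcardE : Fintype.card E = q ^ n := by
    rw [Module.card_eq_pow_finrank (K := F) (V := E), hE]
  have hcardU : Nat.card Eˣ = q ^ n - 1 := by
    rw [Nat.card_units, Nat.card_eq_fintype_card, hcardE]
  let b : Module.Basis (Fin n) F E := Module.finBasisOfFinrankEq F E hE
  let φ : E →ₐ[F] Matrix (Fin n) (Fin n) F := Algebra.leftMulMatrix b
  have hφunit : ∀ a : E, a ≠ 0 → IsUnit (φ a) := fun a ha =>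
    (isUnit_iff_ne_zero.mpr ha).map φ
  have hφdet : ∀ a : E, a ≠ 0 → IsUnit (φ a).det := fun a ha =>
    (Matrix.isUnit_iff_isUnit_det (φ a)).mp (hφunit a ha)
  have hφcancel : ∀ (a : E) (A : Matrix (Fin n) (Fin n) F),
      a ≠ 0 → φ a * A = 0 → A = 0 := fun a A ha h => by
    have := (hφunit a ha).mul_left_cancel (b := A) (c := 0) (by simpa using h)
    exact this
  -- the subtype of nonzero tuples of weight at most r
  let S : Type := {X : Fin t → Matrix (Fin n) (Fin n) F // X ≠ 0 ∧ sumRankW X ≤ r}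
  letI : MulAction Eˣ S :=
    { smul := fun u X => ⟨fun i => φ (u : E) * X.1 i, by
        constructor
        · intro h
          apply X.2.1
          funext i
          exact hφcancel _ _ (Units.ne_zero u) (congrFun h i)
        · have : sumRankW (fun i => φ (u : E) * X.1 i) = sumRankW X.1 := by
            unfold sumRankW
            exact Finset.sum_congr rfl fun i _ =>
              Matrix.rank_mul_eq_right_of_isUnit_det _ _ (hφdet _ (Units.ne_zero u))
          rw [this]
          exact X.2.2⟩
      one_smul := fun X => by
        apply Subtype.ext
        show (fun i => φ ((1 : Eˣ) : E) * X.1 i) = X.1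
        funext i
        simp
      mul_smul := fun u v X => by
        apply Subtype.ext
        show (fun i => φ ((u * v : Eˣ) : E) * X.1 i)
            = fun i => φ (u : E) * (φ (v : E) * X.1 i)
        funext i
        rw [Units.val_mul, _root_.map_mul, mul_assoc] }
  have hfree : ∀ (u : Eˣ) (X : S), u • X = X → u = 1 := by
    intro u X h
    have h' : ∀ i, φ (u : E) * X.1 i = X.1 i := fun i =>
      congrFun (congrArg Subtype.val h) i
    obtain ⟨i, hi⟩ := Function.ne_iff.mp X.2.1
    by_contra hu
    have hne : (u : E) - 1 ≠ 0 := by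
      intro h0
      exact hu (Units.ext (by simpa [sub_eq_zero] using h0))
    apply hi
    show X.1 i = 0
    refine hφcancel _ _ hne ?_
    rw [_root_.map_sub, _root_.map_one, sub_mul, one_mul, h' i, sub_self]
  have hdvdS : q ^ n - 1 ∣ Nat.card S := by
    rw [← hcardU]
    exact card_dvd_of_free_action hfree
  -- ball volume decomposition
  have h0w : sumRankW (0 : Fin t → Matrix (Fin n) (Fin n) F) = 0 := by
    unfold sumRankW
    simp [Pi.zero_apply, Matrix.rank_zero]
  have hball : ballVol F t n n r = Nat.card S + 1 := by
    rw [ballVol]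
    have hset : {X : Fin t → Matrix (Fin n) (Fin n) F | sumRankW X ≤ r} = insert 0 {X : Fin t → Matrix (Fin n) (Fin n) F | X ≠ 0 ∧ sumRankW X ≤ r} := by
      ext X
      by_cases hX : X = 0
      · subst hX
        simp [h0w]
      · simp [hX]
    show Nat.card ↥{X : Fin t → Matrix (Fin n) (Fin n) F | sumRankW X ≤ r}
        = Nat.card ↥{X : Fin t → Matrix (Fin n) (Fin n) F | X ≠ 0 ∧ sumRankW X ≤ r} + 1
    rw [Nat.card_coe_set_eq, hset, Set.ncard_insert_of_notMem (by simp),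
      ← Nat.card_coe_set_eq]
  -- cardinalities
  have hNM : Nat.card (Fin t → Matrix (Fin n) (Fin n) F)
      = q ^ Module.finrank F (Fin t → Matrix (Fin n) (Fin n) F) := by
    rw [Nat.card_eq_fintype_card,
      Module.card_eq_pow_finrank (K := F) (V := Fin t → Matrix (Fin n) (Fin n) F)]
  have hNC : Nat.card C = q ^ Module.finrank F C := by
    letI : Fintype C := Fintype.ofFinite C
    rw [Nat.card_eq_fintype_card, Module.card_eq_pow_finrank (K := F) (V := C)]
  have hndvdM : n ∣ Module.finrank F (Fin t → Matrix (Fin n) (Fin n) F) := by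
    have : Module.finrank F (Fin t → Matrix (Fin n) (Fin n) F) = ∑ _i : Fin t, (n * n * 1) := by
      rw [Module.finrank_pi_fintype]
      congr 1
      funext i
      rw [Module.finrank_matrix]
      simp
    rw [this]
    simp [Finset.sum_const]
    exact ⟨t * n, by ring⟩
  have hle : Module.finrank F C ≤ Module.finrank F (Fin t → Matrix (Fin n) (Fin n) F) :=
    Submodule.finrank_le C
  -- the perfect code equation
  have heq : q ^ Module.finrank F C * ballVol F t n n r
      = q ^ Module.finrank F (Fin t → Matrix (Fin n) (Fin n) F) := by
    rw [← hNC, ← hNM]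
    exact hperf
  set m : ℕ := Module.finrank F (Fin t → Matrix (Fin n) (Fin n) F) - Module.finrank F C with hm
  have hfm : Module.finrank F (Fin t → Matrix (Fin n) (Fin n) F)
      = Module.finrank F C + m := by omega
  have hV : ballVol F t n n r = q ^ m := by
    have : q ^ Module.finrank F C * ballVol F t n n r
        = q ^ Module.finrank F C * q ^ m := by
      rw [heq, hfm, pow_add]
    exact Nat.eq_of_mul_eq_mul_left (pow_pos (by omega) _) this
  have hcardS : Nat.card S = q ^ m - 1 := by omega
  have hndvdm : n ∣ m := by
    apply aux_dvd_of_pow_sub_one_dvd hq2 hn0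
    rw [← hcardS]
    exact hdvdS
  have : Module.finrank F C
      = Module.finrank F (Fin t → Matrix (Fin n) (Fin n) F) - m := by omega
  rw [this]
  exact Nat.dvd_sub hndvdM hndvdm
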